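/- Let Ω ⊂ ℝⁿ be a bounded domain and let u ∈ C(Ω̄). Suppose there exist constants ε₀ > 0, C₁ > 0, C₂ > 0 and α ∈ (0,1) such that: (1) |u(x) − u(y)| ≤ C₁|x − y|^α for all x ∈ Ω and y ∈ ∂Ω; (2) for every ε ∈ (0, ε₀), |û_ε(x) − u(x)| ≤ C₂ ε^α for all x ∈ Ω_ε, where û_ε denotes the ball average of u. Then there exists a constant C > 0, depending only on ε₀, C₁, C₂, n, diam(Ω) and α, such that |u(x) − u(y)| ≤ C|x − y|^α for all x, y ∈ Ω. -/

import Mathlib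

open MeasureTheory Metric

private lemma bern (m : ℕ) {t : ℝ} (ht0 : 0 ≤ t) (ht1 : t ≤ 1) :
    1 - (m:ℝ) * t ≤ (1 - t) ^ m := by
  have h := one_add_mul_le_pow (a := -t) (by linarith) m
  have h2 : (1:ℝ) + (m:ℝ) * (-t) = 1 - m*t := by ring
  have h3 : (1:ℝ) + (-t) = 1 - t := by ring
  rw [h2, h3] at h; exact h

private lemma avg_diff_le {n : ℕ} [Nontrivial (EuclideanSpace ℝ (Fin n))]
    (f : EuclideanSpace ℝ (Fin n) → ℝ) (x y : EuclideanSpace ℝ (Fin n))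
    {ε r ω : ℝ} (hε : 0 < ε) (hxyr : dist x y ≤ r) (hrε : r ≤ ε) (hω : 0 ≤ ω)
    (hfx : IntegrableOn f (ball x ε) volume) (hfy : IntegrableOn f (ball y ε) volume)
    (hbd : ∀ p ∈ ball x ε ∪ ball y ε, |f p - f x| ≤ ω) :
    |(⨍ p in ball x ε, f p) - ⨍ p in ball y ε, f p| ≤ 2 * ω * (n * (r / ε)) := by
  have hr0 : 0 ≤ r := le_trans dist_nonneg hxyr
  have hεr : 0 ≤ ε - r := by linarith
  set c := f x with hc
  set g : EuclideanSpace ℝ (Fin n) → ℝ := fun p => f p - c with hg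
  have hconst : ∀ z : EuclideanSpace ℝ (Fin n),
      IntegrableOn (fun _ => c) (ball z ε) volume :=
    fun z => integrableOn_const measure_ball_lt_top.ne
  have hgx : IntegrableOn g (ball x ε) volume := hfx.sub (hconst x)
  have hgy : IntegrableOn g (ball y ε) volume := hfy.sub (hconst y)
  have hVy : volume (ball y ε) = volume (ball x ε) := by
    rw [Measure.addHaar_ball volume y hε.le, Measure.addHaar_ball volume x hε.le]
  set V := (volume (ball x ε)).toReal with hV
  have hV0 : 0 < V := ENNReal.toReal_pos (measure_ball_pos _ _ hε).ne' measure_ball_lt_top.ne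
  have hsplit : ∀ z : EuclideanSpace ℝ (Fin n), volume (ball z ε) = volume (ball x ε) →
      IntegrableOn f (ball z ε) volume →
      (⨍ p in ball z ε, f p) = V⁻¹ * (∫ p in ball z ε, g p) + c := by
    intro z hz hfz
    have h1 : ∫ p in ball z ε, g p = (∫ p in ball z ε, f p) - V * c := by
      rw [hg]
      rw [integral_sub hfz (hconst z), setIntegral_const, measureReal_def, hz]
      simp [hV, smul_eq_mul]
    rw [setAverage_eq, measureReal_def, hz, ← hV, h1, smul_eq_mul]
    field_simp
    ring
  rw [hsplit x rfl hfx, hsplit y hVy hfy]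
  have hdiffeq : (V⁻¹ * (∫ p in ball x ε, g p) + c) - (V⁻¹ * (∫ p in ball y ε, g p) + c)
      = V⁻¹ * ((∫ p in ball x ε, g p) - ∫ p in ball y ε, g p) := by ring
  rw [hdiffeq]
  have e1 := integral_inter_add_diff (μ := volume) (s := ball x ε) (t := ball y ε)
    measurableSet_ball hgx
  have e2 := integral_inter_add_diff (μ := volume) (s := ball y ε) (t := ball x ε)
    measurableSet_ball hgy
  rw [Set.inter_comm] at e2
  have hIxy : (∫ p in ball x ε, g p) - ∫ p in ball y ε, g p
      = (∫ p in ball x ε \ ball y ε, g p) - ∫ p in ball y ε \ ball x ε, g p := by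
    linarith
  rw [hIxy]
  -- measure estimates
  set B0 := ball x (ε - r) with hB0
  have hB0x : B0 ⊆ ball x ε := ball_subset_ball (by linarith)
  have hB0y : B0 ⊆ ball y ε := by
    intro p hp
    rw [hB0, mem_ball] at hp
    rw [mem_ball]
    have := dist_triangle p x y
    have hxy' : dist x y ≤ r := hxyr
    linarith
  set W := (volume B0).toReal with hW
  have hfin : ∀ s : Set (EuclideanSpace ℝ (Fin n)), s ⊆ ball x ε ∪ ball y ε →
      volume s < ⊤ := by
    intro s hs
    calc volume s ≤ volume (ball x ε ∪ ball y ε) := measure_mono hs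
    _ ≤ volume (ball x ε) + volume (ball y ε) := measure_union_le _ _
    _ < ⊤ := ENNReal.add_lt_top.2 ⟨measure_ball_lt_top, measure_ball_lt_top⟩
  have h1' : (volume (ball x ε \ ball y ε)).toReal ≤ V - W := by
    have hle : volume (ball x ε \ ball y ε) ≤ volume (ball x ε) - volume B0 := by
      calc volume (ball x ε \ ball y ε) ≤ volume (ball x ε \ B0) :=
            measure_mono (Set.diff_subset_diff_right hB0y)
      _ = volume (ball x ε) - volume B0 :=
            measure_diff hB0x measurableSet_ball.nullMeasurableSet measure_ball_lt_top.ne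
    have := ENNReal.toReal_mono (by
        exact (lt_of_le_of_lt (le_trans tsub_le_self le_rfl) measure_ball_lt_top).ne) hle
    rwa [ENNReal.toReal_sub_of_le (measure_mono hB0x) measure_ball_lt_top.ne] at this
  have h2' : (volume (ball y ε \ ball x ε)).toReal ≤ V - W := by
    have hle : volume (ball y ε \ ball x ε) ≤ volume (ball y ε) - volume B0 := by
      calc volume (ball y ε \ ball x ε) ≤ volume (ball y ε \ B0) :=
            measure_mono (Set.diff_subset_diff_right hB0x)
      _ = volume (ball y ε) - volume B0 :=
            measure_diff hB0y measurableSet_ball.nullMeasurableSet measure_ball_lt_top.ne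
    have := ENNReal.toReal_mono (by
        exact (lt_of_le_of_lt (le_trans tsub_le_self le_rfl) measure_ball_lt_top).ne) hle
    rw [ENNReal.toReal_sub_of_le (measure_mono hB0y) measure_ball_lt_top.ne, hVy] at this
    exact this
  have i1 : |∫ p in ball x ε \ ball y ε, g p| ≤ ω * (V - W) := by
    have hb := norm_setIntegral_le_of_norm_le_const (μ := volume)
      (s := ball x ε \ ball y ε) (f := g)
      (hfin _ (fun p hp => Or.inl hp.1))
      (fun p hp => by rw [Real.norm_eq_abs]; exact hbd p (Or.inl hp.1))
    rw [Real.norm_eq_abs] at hb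
    calc |∫ p in ball x ε \ ball y ε, g p| ≤ ω * (volume (ball x ε \ ball y ε)).toReal := hb
    _ ≤ ω * (V - W) := mul_le_mul_of_nonneg_left h1' hω
  have i2 : |∫ p in ball y ε \ ball x ε, g p| ≤ ω * (V - W) := by
    have hb := norm_setIntegral_le_of_norm_le_const (μ := volume)
      (s := ball y ε \ ball x ε) (f := g)
      (hfin _ (fun p hp => Or.inr hp.1))
      (fun p hp => by rw [Real.norm_eq_abs]; exact hbd p (Or.inr hp.1))
    rw [Real.norm_eq_abs] at hb
    calc |∫ p in ball y ε \ ball x ε, g p| ≤ ω * (volume (ball y ε \ ball x ε)).toReal := hb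
    _ ≤ ω * (V - W) := mul_le_mul_of_nonneg_left h2' hω
  -- ratio estimate
  set c₀ := (volume (ball (0 : EuclideanSpace ℝ (Fin n)) 1)).toReal with hc₀
  have hc₀0 : 0 ≤ c₀ := ENNReal.toReal_nonneg
  have hVeq : V = ε ^ n * c₀ := by
    rw [hV, Measure.addHaar_ball volume x hε.le, ENNReal.toReal_mul,
      ENNReal.toReal_ofReal (by positivity), finrank_euclideanSpace_fin]
  have hWeq : W = (ε - r) ^ n * c₀ := by
    rw [hW, hB0, Measure.addHaar_ball volume x hεr, ENNReal.toReal_mul,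
      ENNReal.toReal_ofReal (by positivity), finrank_euclideanSpace_fin]
  have ht1 : r / ε ≤ 1 := (div_le_one hε).2 hrε
  have ht0 : 0 ≤ r / ε := by positivity
  have hb := bern n ht0 ht1
  have htpow : (1 - r/ε) ^ n * ε ^ n = (ε - r) ^ n := by
    rw [← mul_pow]
    congr 1
    field_simp
  have hratio : V - W ≤ V * (n * (r / ε)) := by
    rw [hVeq, hWeq]
    have hεn : (0:ℝ) ≤ ε ^ n := by positivity
    nlinarith [mul_le_mul_of_nonneg_right (mul_le_mul_of_nonneg_right hb hεn) hc₀0]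
  calc |V⁻¹ * ((∫ p in ball x ε \ ball y ε, g p) - ∫ p in ball y ε \ ball x ε, g p)|
      = V⁻¹ * |(∫ p in ball x ε \ ball y ε, g p) - ∫ p in ball y ε \ ball x ε, g p| := by
        rw [abs_mul, abs_of_nonneg (by positivity : (0:ℝ) ≤ V⁻¹)]
    _ ≤ V⁻¹ * (|∫ p in ball x ε \ ball y ε, g p| + |∫ p in ball y ε \ ball x ε, g p|) := by
        apply mul_le_mul_of_nonneg_left (abs_sub _ _) (by positivity)
    _ ≤ V⁻¹ * (2 * ω * (V - W)) := by
        apply mul_le_mul_of_nonneg_left (by linarith) (by positivity)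
    _ ≤ V⁻¹ * (2 * ω * (V * (n * (r / ε)))) := by
        apply mul_le_mul_of_nonneg_left _ (by positivity)
        apply mul_le_mul_of_nonneg_left hratio (by positivity)
    _ = 2 * ω * (n * (r / ε)) := by
        field_simp


set_option maxHeartbeats 1000000 in
/-- Hölder continuity via ball-average regularization: if `u` is Hölder
against boundary points and its ball averages `û_ε` satisfy `|û_ε - u| ≤ C₂ ε^α` on `Ω_ε`,
then `u` is globally `α`-Hölder on `Ω`. -/
theorem stmt_1
    (n : ℕ) (Ω : Set (EuclideanSpace ℝ (Fin n)))
    (hΩo : IsOpen Ω) (hΩb : Bornology.IsBounded Ω) (hΩc : IsConnected Ω)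
    (u : EuclideanSpace ℝ (Fin n) → ℝ) (hu : ContinuousOn u (closure Ω))
    (ε₀ C₁ C₂ α : ℝ) (hε₀ : 0 < ε₀) (hC₁ : 0 < C₁) (hC₂ : 0 < C₂)
    (hα : α ∈ Set.Ioo (0:ℝ) 1)
    (hbdry : ∀ x ∈ Ω, ∀ y ∈ frontier Ω, |u x - u y| ≤ C₁ * ‖x - y‖ ^ α)
    (hreg : ∀ ε : ℝ, 0 < ε → ε < ε₀ → ∀ x ∈ Ω, ε < infDist x (frontier Ω) →
      |(⨍ y in ball x ε, u y) - u x| ≤ C₂ * ε ^ α) :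
    ∃ C > 0, ∀ x ∈ Ω, ∀ y ∈ Ω, |u x - u y| ≤ C * ‖x - y‖ ^ α := by
  obtain ⟨hα0, hα1⟩ := hα
  -- global bound on oscillation
  obtain ⟨M₀, hM₀⟩ := (hΩb.isCompact_closure).exists_bound_of_continuousOn hu
  set M : ℝ := 2 * M₀ with hMdef
  have hM : ∀ z ∈ Ω, ∀ w ∈ Ω, |u z - u w| ≤ M := by
    intro z hz w hw
    have h1 := hM₀ z (subset_closure hz)
    have h2 := hM₀ w (subset_closure hw)
    rw [Real.norm_eq_abs] at h1 h2
    calc |u z - u w| ≤ |u z| + |u w| := abs_sub _ _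
    _ ≤ M := by rw [hMdef]; linarith
  have hM0 : 0 ≤ M := by
    obtain ⟨z, hz⟩ := hΩc.nonempty
    have := hM z hz z hz
    have := abs_nonneg (u z - u z)
    linarith
  -- the constant K
  set K : ℝ := (8 * ((n:ℝ) + 1)) ^ ((1:ℝ)/(1-α)) with hKdef
  have h8n : (1:ℝ) ≤ 8 * ((n:ℝ) + 1) := by
    have : (0:ℝ) ≤ (n:ℝ) := Nat.cast_nonneg n
    linarith
  have hK1 : 1 ≤ K := Real.one_le_rpow h8n (one_div_nonneg.2 (by linarith : (0:ℝ) ≤ 1 - α))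
  have hK0 : 0 < K := lt_of_lt_of_le one_pos hK1
  have hKpow : K ^ (1 - α) = 8 * ((n:ℝ) + 1) := by
    rw [hKdef, ← Real.rpow_mul (by linarith), one_div,
      inv_mul_cancel₀ (by linarith : (1:ℝ) - α ≠ 0), Real.rpow_one]
  -- key numeric inequality : 2 * n * (K+1)^α / K ≤ 1/2
  have hKα : K ^ α * K ^ (1 - α) = K := by
    rw [← Real.rpow_add hK0, add_sub_cancel, Real.rpow_one]
  have hKαpos : 0 < K ^ α := Real.rpow_pos_of_pos hK0 α
  have hK1α : (K + 1) ^ α ≤ 2 * K ^ α := by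
    calc (K + 1) ^ α ≤ (2 * K) ^ α :=
          Real.rpow_le_rpow (by linarith) (by linarith) hα0.le
    _ = 2 ^ α * K ^ α := Real.mul_rpow (by norm_num) hK0.le
    _ ≤ 2 * K ^ α := by
        have h2 : (2:ℝ) ^ α ≤ 2 ^ (1:ℝ) :=
          Real.rpow_le_rpow_of_exponent_le (by norm_num) hα1.le
        rw [Real.rpow_one] at h2
        exact mul_le_mul_of_nonneg_right h2 hKαpos.le
  have hkey : 2 * (n:ℝ) * (K + 1) ^ α / K ≤ 1/2 := by
    rw [div_le_iff₀ hK0]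
    have h1 : 2 * (n:ℝ) * (K + 1) ^ α ≤ 4 * (n:ℝ) * K ^ α := by
      have hn0 : (0:ℝ) ≤ (n:ℝ) := Nat.cast_nonneg n
      nlinarith [hK1α]
    have h2 : 8 * (n:ℝ) * K ^ α ≤ K := by
      have : 8 * (n:ℝ) * K ^ α ≤ (8 * ((n:ℝ)+1)) * K ^ α := by
        have hn0 : (0:ℝ) ≤ (n:ℝ) := Nat.cast_nonneg n
        nlinarith
      calc 8 * (n:ℝ) * K ^ α ≤ (8 * ((n:ℝ)+1)) * K ^ α := this
      _ = K ^ (1-α) * K ^ α := by rw [hKpow]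
      _ = K := by rw [mul_comm]; exact hKα
    linarith
  -- the constant C
  set C : ℝ := M * (K/ε₀) ^ α + 2*C₁*(K+1) ^ α + 4*C₂*K ^ α + 1 with hCdef
  have hranneg : ∀ a : ℝ, 0 ≤ a ^ α → True := fun _ _ => trivial
  have hKε₀ : (0:ℝ) ≤ (K/ε₀) ^ α := Real.rpow_nonneg (by positivity) α
  have hK1n : (0:ℝ) ≤ (K+1) ^ α := Real.rpow_nonneg (by linarith) α
  have hCpos : 0 < C := by
    rw [hCdef]
    nlinarith [mul_nonneg hM0 hKε₀, mul_nonneg (by linarith : (0:ℝ) ≤ 2*C₁) hK1n,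
      mul_nonneg (by linarith : (0:ℝ) ≤ 4*C₂) hKαpos.le]
  have hCf1 : M * (K/ε₀) ^ α ≤ C := by
    rw [hCdef]
    nlinarith [mul_nonneg (by linarith : (0:ℝ) ≤ 2*C₁) hK1n,
      mul_nonneg (by linarith : (0:ℝ) ≤ 4*C₂) hKαpos.le]
  have hCf2 : 2*C₁*(K+1) ^ α ≤ C := by
    rw [hCdef]
    nlinarith [mul_nonneg hM0 hKε₀, mul_nonneg (by linarith : (0:ℝ) ≤ 4*C₂) hKαpos.le]
  have hCf3 : 4*C₂*K ^ α ≤ C := by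
    rw [hCdef]
    nlinarith [mul_nonneg hM0 hKε₀, mul_nonneg (by linarith : (0:ℝ) ≤ 2*C₁) hK1n]
  -- the scales
  set δ : ℕ → ℝ := fun k => ε₀ / K / (K+1)^k with hδdef
  have hδpos : ∀ k, 0 < δ k := by
    intro k
    rw [hδdef]
    positivity
  have hδsucc : ∀ k, (K+1) * δ (k+1) = δ k := by
    intro k
    rw [hδdef]
    simp only []
    rw [pow_succ]
    field_simp
  -- main claim by induction
  have claim : ∀ k : ℕ, ∀ s : ℝ, δ k ≤ s → ∀ x ∈ Ω, ∀ y ∈ Ω, ‖x - y‖ ≤ s →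
      |u x - u y| ≤ C * s ^ α := by
    intro k
    induction k with
    | zero =>
      intro s hs x hx y hy _
      have hs0 : 0 < s := lt_of_lt_of_le (hδpos 0) hs
      have hδ0 : δ 0 = ε₀ / K := by rw [hδdef]; simp
      rw [hδ0] at hs
      have h1 : (1:ℝ) ≤ (K/ε₀ * s) ^ α := by
        have hge : (1:ℝ) ≤ K/ε₀ * s := by
          rw [div_mul_eq_mul_div, le_div_iff₀ hε₀]
          calc (1:ℝ) * ε₀ = ε₀ := one_mul _
          _ = K * (ε₀ / K) := by field_simp
          _ ≤ K * s := mul_le_mul_of_nonneg_left hs hK0.le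
        calc (1:ℝ) = 1 ^ α := (Real.one_rpow α).symm
        _ ≤ (K/ε₀ * s) ^ α := Real.rpow_le_rpow zero_le_one hge hα0.le
      have h2 : (K/ε₀ * s) ^ α = (K/ε₀) ^ α * s ^ α :=
        Real.mul_rpow (by positivity) hs0.le
      calc |u x - u y| ≤ M := hM x hx y hy
      _ = M * 1 := (mul_one M).symm
      _ ≤ M * ((K/ε₀) ^ α * s ^ α) := by
          rw [← h2]; exact mul_le_mul_of_nonneg_left h1 hM0
      _ = (M * (K/ε₀) ^ α) * s ^ α := by ring
      _ ≤ C * s ^ α := by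
          apply mul_le_mul_of_nonneg_right hCf1 (Real.rpow_nonneg hs0.le α)
    | succ k ih =>
      intro s hs x hx y hy hdist
      by_cases hss : δ k ≤ s
      · exact ih s hss x hx y hy hdist
      push_neg at hss
      have hs0 : 0 < s := lt_of_lt_of_le (hδpos (k+1)) hs
      have hsα : (0:ℝ) ≤ s ^ α := Real.rpow_nonneg hs0.le α
      rcases eq_or_ne x y with rfl | hxy
      · simp only [sub_self, abs_zero]
        positivity
      haveI : Nontrivial (EuclideanSpace ℝ (Fin n)) := ⟨⟨x, y, hxy⟩⟩
      have hΩne : Ω ≠ Set.univ := by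
        intro h
        exact NormedSpace.unbounded_univ ℝ (EuclideanSpace ℝ (Fin n)) (h ▸ hΩb)
      have hfrsub : frontier Ω ⊆ Ωᶜ := by
        intro w hw
        have : w ∉ interior Ω := hw.2
        rwa [hΩo.interior_eq] at this
      -- infDist to frontier equals infDist to complement, for points of Ω
      have hinf : ∀ w ∈ Ω, infDist w Ωᶜ ≤ infDist w (frontier Ω) ∧
          ∃ z ∈ frontier Ω, dist w z = infDist w Ωᶜ := by
        intro w hw
        obtain ⟨z, hzF, hzd⟩ := exists_mem_frontier_infDist_compl_eq_dist hw hΩne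
        exact ⟨infDist_le_infDist_of_subset hfrsub ⟨z, hzF⟩, z, hzF, hzd.symm⟩
      -- boundary case helper
      have hbcase : ∀ x' ∈ Ω, ∀ y' ∈ Ω, ‖x' - y'‖ ≤ s → infDist x' (frontier Ω) ≤ K*s →
          |u x' - u y'| ≤ C * s ^ α := by
        intro x' hx' y' hy' hd hnear
        obtain ⟨hle, z, hzF, hzd⟩ := hinf x' hx'
        have hdz : dist x' z ≤ K * s := by
          rw [hzd]; exact le_trans hle hnear
        have hxz : ‖x' - z‖ ≤ K * s := by rwa [← dist_eq_norm]
        have hyz : ‖y' - z‖ ≤ (K+1) * s := by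
          calc ‖y' - z‖ ≤ ‖y' - x'‖ + ‖x' - z‖ := norm_sub_le_norm_sub_add_norm_sub _ _ _
          _ ≤ s + K * s := by
              rw [norm_sub_rev x' y'] at hd
              exact add_le_add hd hxz
          _ = (K+1) * s := by ring
        have b1 : |u x' - u z| ≤ C₁ * (K * s) ^ α := by
          calc |u x' - u z| ≤ C₁ * ‖x' - z‖ ^ α := hbdry x' hx' z hzF
          _ ≤ C₁ * (K * s) ^ α := by
              apply mul_le_mul_of_nonneg_left _ hC₁.le
              exact Real.rpow_le_rpow (norm_nonneg _) hxz hα0.le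
        have b2 : |u y' - u z| ≤ C₁ * ((K+1) * s) ^ α := by
          calc |u y' - u z| ≤ C₁ * ‖y' - z‖ ^ α := hbdry y' hy' z hzF
          _ ≤ C₁ * ((K+1) * s) ^ α := by
              apply mul_le_mul_of_nonneg_left _ hC₁.le
              exact Real.rpow_le_rpow (norm_nonneg _) hyz hα0.le
        have hKs : (K * s) ^ α ≤ (K+1) ^ α * s ^ α := by
          rw [Real.mul_rpow hK0.le hs0.le]
          apply mul_le_mul_of_nonneg_right _ hsα
          exact Real.rpow_le_rpow hK0.le (by linarith) hα0.le
        have hK1s : ((K+1) * s) ^ α = (K+1) ^ α * s ^ α :=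
          Real.mul_rpow (by linarith) hs0.le
        calc |u x' - u y'| ≤ |u x' - u z| + |u z - u y'| := abs_sub_le _ _ _
        _ = |u x' - u z| + |u y' - u z| := by rw [abs_sub_comm (u z)]
        _ ≤ C₁ * (K * s) ^ α + C₁ * ((K+1) * s) ^ α := add_le_add b1 b2
        _ ≤ 2*C₁*(K+1) ^ α * s ^ α := by
            rw [hK1s]
            nlinarith [mul_le_mul_of_nonneg_left hKs hC₁.le]
        _ ≤ C * s ^ α := mul_le_mul_of_nonneg_right hCf2 hsα
      rcases le_or_gt (infDist x (frontier Ω)) (K*s) with hdx | hdx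
      · exact hbcase x hx y hy hdist hdx
      rcases le_or_gt (infDist y (frontier Ω)) (K*s) with hdy | hdy
      · rw [abs_sub_comm]
        exact hbcase y hy x hx (by rwa [norm_sub_rev]) hdy
      -- interior case
      set ε := K * s with hεdef
      have hε0 : 0 < ε := by positivity
      have hεε₀ : ε < ε₀ := by
        have h1 : ε < K * δ k := by
          rw [hεdef]; exact mul_lt_mul_of_pos_left hss hK0
        have h2 : K * δ k = ε₀ / (K+1)^k := by
          rw [hδdef]; field_simp
        have h3 : ε₀ / (K+1)^k ≤ ε₀ := by
          apply div_le_self hε₀.le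
          exact one_le_pow₀ (by linarith)
        linarith [h1, h2 ▸ h1]
      have hregx := hreg ε hε0 hεε₀ x hx hdx
      have hregy := hreg ε hε0 hεε₀ y hy hdy
      -- balls inside Ω
      have hball : ∀ w ∈ Ω, ε < infDist w (frontier Ω) → ball w ε ⊆ Ω := by
        intro w hw hwd
        have hle := (hinf w hw).1
        obtain ⟨z, hzF, hzd⟩ := (hinf w hw).2
        have h2 : infDist w (frontier Ω) ≤ infDist w Ωᶜ := by
          rw [← hzd]
          exact infDist_le_dist_of_mem hzF
        calc ball w ε ⊆ ball w (infDist w Ωᶜ) := ball_subset_ball (by linarith)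
        _ ⊆ Ω := ball_infDist_compl_subset
      have hbx : ball x ε ⊆ Ω := hball x hx hdx
      have hby : ball y ε ⊆ Ω := hball y hy hdy
      -- integrability
      have hint : ∀ w : EuclideanSpace ℝ (Fin n), ball w ε ⊆ Ω →
          IntegrableOn u (ball w ε) volume := by
        intro w hsub
        have hcb : closedBall w ε ⊆ closure Ω := by
          rw [← closure_ball w hε0.ne']
          exact closure_mono hsub
        exact (ContinuousOn.integrableOn_compact (isCompact_closedBall w ε)
          (hu.mono hcb)).mono_set ball_subset_closedBall
      -- IH gives the oscillation bound on the union of balls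
      set ω : ℝ := C * ((K+1) * s) ^ α with hωdef
      have hω0 : 0 ≤ ω := by
        rw [hωdef]
        have : (0:ℝ) ≤ ((K+1) * s) ^ α := Real.rpow_nonneg (by positivity) α
        positivity
      have hδk : δ k ≤ (K+1) * s := by
        rw [← hδsucc k]
        exact mul_le_mul_of_nonneg_left hs (by linarith)
      have hbd : ∀ p ∈ ball x ε ∪ ball y ε, |u p - u x| ≤ ω := by
        intro p hp
        have hpΩ : p ∈ Ω := by
          rcases hp with hp | hp
          · exact hbx hp
          · exact hby hp
        have hpd : ‖p - x‖ ≤ (K+1) * s := by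
          rcases hp with hp | hp
          · rw [mem_ball] at hp
            rw [← dist_eq_norm]
            calc dist p x ≤ ε := hp.le
            _ ≤ (K+1) * s := by rw [hεdef]; nlinarith
          · rw [mem_ball] at hp
            rw [← dist_eq_norm]
            calc dist p x ≤ dist p y + dist y x := dist_triangle _ _ _
            _ ≤ ε + s := by
                rw [dist_comm y x, dist_eq_norm]
                exact add_le_add hp.le hdist
            _ = (K+1) * s := by rw [hεdef]; ring
        exact ih ((K+1) * s) hδk p hpΩ x hx hpd
      -- average difference bound
      have hdxy : dist x y ≤ s := by rw [dist_eq_norm]; exact hdist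
      have hsε' : s ≤ ε := by rw [hεdef]; nlinarith
      have havg := avg_diff_le u x y (r := s) hε0 hdxy hsε' hω0
        (hint x hbx) (hint y hby) hbd
      -- combine
      have htri : |u x - u y| ≤ C₂ * ε ^ α + (2 * ω * (n * (s / ε))) + C₂ * ε ^ α := by
        have e1 : |u x - (⨍ p in ball x ε, u p)| ≤ C₂ * ε ^ α := by
          rw [abs_sub_comm]; exact hregx
        have e2 : |(⨍ p in ball y ε, u p) - u y| ≤ C₂ * ε ^ α := hregy
        calc |u x - u y|
            ≤ |u x - (⨍ p in ball x ε, u p)| +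
              |(⨍ p in ball x ε, u p) - (⨍ p in ball y ε, u p)| +
              |(⨍ p in ball y ε, u p) - u y| := by
              have t1 : |u x - u y| ≤ |u x - (⨍ p in ball x ε, u p)| +
                  |(⨍ p in ball x ε, u p) - u y| := abs_sub_le _ _ _
              have t2 : |(⨍ p in ball x ε, u p) - u y| ≤
                  |(⨍ p in ball x ε, u p) - (⨍ p in ball y ε, u p)| +
                  |(⨍ p in ball y ε, u p) - u y| := abs_sub_le _ _ _
              linarith
        _ ≤ C₂ * ε ^ α + (2 * ω * (n * (s / ε))) + C₂ * ε ^ α :=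
            add_le_add (add_le_add e1 havg) e2
      -- arithmetic
      have hεα : ε ^ α = K ^ α * s ^ α := by
        rw [hεdef]; exact Real.mul_rpow hK0.le hs0.le
      have hωeq : ω = C * ((K+1) ^ α * s ^ α) := by
        rw [hωdef, Real.mul_rpow (by linarith) hs0.le]
      have hsε : s / ε = 1 / K := by
        rw [hεdef]; field_simp
      have hmid : 2 * ω * (n * (s / ε)) ≤ (C / 2) * s ^ α := by
        rw [hωeq, hsε]
        have : 2 * (C * ((K+1) ^ α * s ^ α)) * ((n:ℝ) * (1 / K))
            = C * s ^ α * (2 * (n:ℝ) * (K+1) ^ α / K) := by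
          field_simp
        rw [this]
        calc C * s ^ α * (2 * (n:ℝ) * (K+1) ^ α / K) ≤ C * s ^ α * (1/2) := by
              apply mul_le_mul_of_nonneg_left hkey
              positivity
        _ = (C / 2) * s ^ α := by ring
      calc |u x - u y| ≤ C₂ * ε ^ α + (2 * ω * (n * (s / ε))) + C₂ * ε ^ α := htri
      _ ≤ C₂ * (K ^ α * s ^ α) + (C / 2) * s ^ α + C₂ * (K ^ α * s ^ α) := by
          rw [hεα]
          linarith [hmid]
      _ = (2 * C₂ * K ^ α + C / 2) * s ^ α := by ring
      _ ≤ C * s ^ α := by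
          apply mul_le_mul_of_nonneg_right _ hsα
          nlinarith [hCf3, hKαpos, hC₂]
  -- conclude
  refine ⟨C, hCpos, ?_⟩
  intro x hx y hy
  rcases eq_or_ne x y with rfl | hxy
  · simp only [sub_self, abs_zero, norm_zero]
    rw [Real.zero_rpow hα0.ne']
    simp
  · have hr0 : 0 < ‖x - y‖ := by
      rw [norm_pos_iff, sub_ne_zero]
      exact hxy
    obtain ⟨k, hk⟩ := pow_unbounded_of_one_lt (ε₀ / K / ‖x - y‖) (by linarith : (1:ℝ) < K + 1)
    have hδk : δ k ≤ ‖x - y‖ := by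
      have h2 : (0:ℝ) < (K+1)^k := by positivity
      have h1 : ε₀ / K ≤ ‖x - y‖ * (K+1)^k := by
        rw [div_lt_iff₀ hr0] at hk
        nlinarith [hk]
      have : δ k = ε₀ / K / (K+1)^k := rfl
      rw [this, div_le_iff₀ h2]
      linarith
    exact claim k ‖x - y‖ hδk x hx y hy le_rfl
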